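/- Let p, q ∈ [1, ∞). If there exists an isometric algebra isomorphism between ℂ² equipped with the norm ‖(x,y)‖_p = ‖u·d(x,y)·u⁻¹‖_{B(ℓᵖ(Fin 2))} and ℂ² equipped with the analogous q-norm (where u = (1/√2)·[[1,1],[1,−1]] is the 2×2 Fourier matrix and d(x,y) = diag(x,y)), then |1/p − 1/2| = |1/q − 1/2|. -/

import Mathlib

open Real
open scoped BigOperators

/-- The `ℓᵖ` norm on `ι → ℂ` for a real exponent `p`. -/
noncomputable def pNorm {ι : Type*} [Fintype ι] (p : ℝ) (ξ : ι → ℂ) : ℝ :=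
  (∑ i, ‖ξ i‖ ^ p) ^ (1 / p)

/-- The operator norm of a matrix acting on `ℓᵖ(ι)`. -/
noncomputable def opNormLp {ι : Type*} [Fintype ι] (p : ℝ) (M : Matrix ι ι ℂ) : ℝ :=
  sInf {c : ℝ | 0 ≤ c ∧ ∀ ξ : ι → ℂ, pNorm p (M.mulVec ξ) ≤ c * pNorm p ξ}

/-- The primitive `n`-th root of unity `ω = exp(2πi/n)`. -/
noncomputable def dftOmega (n : ℕ) : ℂ := Complex.exp (2 * π * Complex.I / n)

/-- The `n × n` Fourier matrix, with entries `u_{jk} = ω^{jk} / √n`. -/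
noncomputable def dftMatrix (n : ℕ) [NeZero n] : Matrix (ZMod n) (ZMod n) ℂ :=
  Matrix.of fun j k => dftOmega n ^ (j.val * k.val) / (Real.sqrt n : ℂ)

/-- The norm `‖ξ‖_{F^p(ℤ_n)} = ‖u·d(ξ)·u⁻¹‖_{B(ℓᵖ)}` on `ℂⁿ`. -/
noncomputable def FpNorm (n : ℕ) [NeZero n] (p : ℝ) (ξ : ZMod n → ℂ) : ℝ :=
  opNormLp p (dftMatrix n * Matrix.diagonal ξ * (dftMatrix n)⁻¹)

/-! ### Auxiliary lemmas -/

lemma sum_zmod2 {M : Type*} [AddCommMonoid M] (f : ZMod 2 → M) : ∑ i, f i = f 0 + f 1 :=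
  Fin.sum_univ_two f

lemma zmod2_cases : ∀ j : ZMod 2, j = 0 ∨ j = 1 := by decide

lemma dftOmega_two : dftOmega 2 = -1 := by
  rw [dftOmega]; push_cast
  rw [show (2 * (π:ℂ) * Complex.I / 2) = π * Complex.I by ring]
  exact Complex.exp_pi_mul_I

lemma dft2_apply' (j k : ZMod 2) :
    dftMatrix 2 j k = (if j = 1 ∧ k = 1 then -1 else 1) / (Real.sqrt 2 : ℂ) := by
  have : dftMatrix 2 j k = (-1:ℂ) ^ (j.val * k.val) / (Real.sqrt 2 : ℂ) := by
    simp [dftMatrix, dftOmega_two]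
  rw [this]
  rcases zmod2_cases j with rfl | rfl <;> rcases zmod2_cases k with rfl | rfl <;>
    simp only [show ((0:ZMod 2)).val = 0 from rfl, show ((1:ZMod 2)).val = 1 from rfl] <;>
    norm_num

lemma sq_sqrt2C : ((Real.sqrt 2 : ℝ):ℂ) * ((Real.sqrt 2 : ℝ):ℂ) = 2 := by
  rw [← Complex.ofReal_mul, Real.mul_self_sqrt (by norm_num : (0:ℝ) ≤ 2)]; norm_num

lemma sqrt2C_ne : ((Real.sqrt 2 : ℝ) : ℂ) ≠ 0 := by
  simp [Real.sqrt_eq_zero']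

lemma dft2_mul_self : dftMatrix 2 * dftMatrix 2 = 1 := by
  ext j k
  rw [Matrix.mul_apply, sum_zmod2]
  rcases zmod2_cases j with rfl | rfl <;> rcases zmod2_cases k with rfl | rfl <;>
    simp only [dft2_apply', Matrix.one_apply, if_true, if_false] <;> norm_num <;>
    field_simp <;> rw [sq, sq_sqrt2C] <;> try norm_num

lemma dft2_inv : (dftMatrix 2)⁻¹ = dftMatrix 2 :=
  Matrix.inv_eq_right_inv dft2_mul_self

/-- The basic mulVec formula for the conjugated diagonal matrix. -/
lemma Fp_mulVec (ξ v : ZMod 2 → ℂ) (j : ZMod 2) :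
    ((dftMatrix 2 * Matrix.diagonal ξ * (dftMatrix 2)⁻¹).mulVec v) j
      = (ξ 0 * (v 0 + v 1) + (if j = 1 then -1 else 1) * (ξ 1 * (v 0 - v 1))) / 2 := by
  rw [dft2_inv, ← Matrix.mulVec_mulVec, ← Matrix.mulVec_mulVec]
  simp only [Matrix.mulVec, dotProduct, sum_zmod2, dft2_apply',
    Matrix.diagonal_apply_eq, Matrix.diagonal_apply_ne, Matrix.diagonal]
  rcases zmod2_cases j with rfl | rfl <;>
    · norm_num [Matrix.of_apply]
      field_simp
      rw [sq, sq_sqrt2C]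
      ring

/-! ### Real power inequalities -/

lemma L1 {r x y : ℝ} (hr0 : 0 ≤ r) (hr : r ≤ 1) (hx : 0 ≤ x) (hy : 0 ≤ y) :
    (x + y) ^ r ≤ x ^ r + y ^ r := by
  lift x to NNReal using hx; lift y to NNReal using hy
  exact_mod_cast NNReal.rpow_add_le_add_rpow x y hr0 hr

lemma L2 {r x y : ℝ} (hr : 1 ≤ r) (hx : 0 ≤ x) (hy : 0 ≤ y) :
    x ^ r + y ^ r ≤ (x + y) ^ r := by
  lift x to NNReal using hx; lift y to NNReal using hy
  exact_mod_cast NNReal.add_rpow_le_rpow_add x y hr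

lemma L3 {r x y : ℝ} (hr : 1 ≤ r) (hx : 0 ≤ x) (hy : 0 ≤ y) :
    (x + y) ^ r ≤ 2 ^ (r - 1) * (x ^ r + y ^ r) := by
  lift x to NNReal using hx; lift y to NNReal using hy
  exact_mod_cast NNReal.rpow_add_le_mul_rpow_add_rpow x y hr

lemma L4 {r x y : ℝ} (hr0 : 1/2 ≤ r) (hr : r ≤ 1) (hx : 0 ≤ x) (hy : 0 ≤ y) :
    x ^ r + y ^ r ≤ 2 ^ (1 - r) * (x + y) ^ r := by
  have hrpos : 0 < r := lt_of_lt_of_le (by norm_num) hr0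
  have hs : 1 ≤ 1 / r := (le_div_iff₀ hrpos).2 (by linarith)
  have h3 := L3 hs (Real.rpow_nonneg hx r) (Real.rpow_nonneg hy r)
  rw [← Real.rpow_mul hx, ← Real.rpow_mul hy, mul_one_div_cancel hrpos.ne',
    Real.rpow_one, Real.rpow_one] at h3
  have h4 := Real.rpow_le_rpow (Real.rpow_nonneg (by positivity) _) h3 hrpos.le
  rw [← Real.rpow_mul (by positivity), one_div_mul_cancel hrpos.ne', Real.rpow_one,
    Real.mul_rpow (by positivity) (by positivity),
    ← Real.rpow_mul (by norm_num)] at h4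
  calc x ^ r + y ^ r ≤ 2 ^ ((1/r - 1) * r) * (x + y) ^ r := h4
  _ = 2 ^ (1 - r) * (x + y) ^ r := by
      congr 1
      rw [sub_mul, one_div_mul_cancel hrpos.ne', one_mul]

lemma B1 {x : ℝ} (hx : 0 ≤ x) (p : ℝ) : (x ^ (2:ℕ)) ^ (p/2) = x ^ p := by
  rw [← Real.rpow_natCast x 2, ← Real.rpow_mul hx]
  norm_num
  congr 1
  ring

lemma pNorm_zmod2 (p : ℝ) (v : ZMod 2 → ℂ) :
    pNorm p v = (‖v 0‖ ^ p + ‖v 1‖ ^ p) ^ (1/p) := by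
  rw [pNorm, sum_zmod2]

/-- The main interpolation-type bound, from the `ℓ²` isometry property. -/
lemma pnorm_bound {p : ℝ} (hp : 1 ≤ p) (v w : ZMod 2 → ℂ)
    (h2 : ‖w 0‖ ^ (2:ℕ) + ‖w 1‖ ^ (2:ℕ) = ‖v 0‖ ^ (2:ℕ) + ‖v 1‖ ^ (2:ℕ)) :
    pNorm p w ≤ 2 ^ |1/p - 1/2| * pNorm p v := by
  have hp0 : 0 < p := lt_of_lt_of_le one_pos hp
  have key : ‖w 0‖ ^ p + ‖w 1‖ ^ p ≤ 2 ^ (|1/p - 1/2| * p) * (‖v 0‖ ^ p + ‖v 1‖ ^ p) := by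
    rcases le_total p 2 with h2p | h2p
    · have e : |1/p - 1/2| * p = 1 - p/2 := by
        have h12 : (1:ℝ)/2 ≤ 1/p := by rw [div_le_div_iff₀ (by norm_num) hp0]; linarith
        rw [abs_of_nonneg (by linarith), sub_mul, one_div_mul_cancel hp0.ne']; ring
      rw [e, ← B1 (norm_nonneg (w 0)) p, ← B1 (norm_nonneg (w 1)) p,
          ← B1 (norm_nonneg (v 0)) p, ← B1 (norm_nonneg (v 1)) p]
      calc (‖w 0‖^(2:ℕ))^(p/2) + (‖w 1‖^(2:ℕ))^(p/2)
          ≤ 2^(1-p/2) * ((‖w 0‖^(2:ℕ) + ‖w 1‖^(2:ℕ)))^(p/2) :=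
            L4 (by linarith) (by linarith) (by positivity) (by positivity)
        _ = 2^(1-p/2) * ((‖v 0‖^(2:ℕ) + ‖v 1‖^(2:ℕ)))^(p/2) := by rw [h2]
        _ ≤ 2^(1-p/2) * ((‖v 0‖^(2:ℕ))^(p/2) + (‖v 1‖^(2:ℕ))^(p/2)) :=
            mul_le_mul_of_nonneg_left
              (L1 (by linarith) (by linarith) (by positivity) (by positivity)) (by positivity)
    · have e : |1/p - 1/2| * p = p/2 - 1 := by
        have h12 : (1:ℝ)/p ≤ 1/2 := by rw [div_le_div_iff₀ hp0 (by norm_num)]; linarith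
        rw [abs_of_nonpos (by linarith), neg_sub, sub_mul, one_div_mul_cancel hp0.ne']; ring
      rw [e, ← B1 (norm_nonneg (w 0)) p, ← B1 (norm_nonneg (w 1)) p,
          ← B1 (norm_nonneg (v 0)) p, ← B1 (norm_nonneg (v 1)) p]
      calc (‖w 0‖^(2:ℕ))^(p/2) + (‖w 1‖^(2:ℕ))^(p/2)
          ≤ ((‖w 0‖^(2:ℕ) + ‖w 1‖^(2:ℕ)))^(p/2) :=
            L2 (by linarith) (by positivity) (by positivity)
        _ = ((‖v 0‖^(2:ℕ) + ‖v 1‖^(2:ℕ)))^(p/2) := by rw [h2]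
        _ ≤ 2^(p/2-1) * ((‖v 0‖^(2:ℕ))^(p/2) + (‖v 1‖^(2:ℕ))^(p/2)) :=
            L3 (by linarith) (by positivity) (by positivity)
  rw [pNorm_zmod2, pNorm_zmod2]
  have h4 := Real.rpow_le_rpow (by positivity) key (by positivity : (0:ℝ) ≤ 1/p)
  rwa [Real.mul_rpow (by positivity) (by positivity), ← Real.rpow_mul (by norm_num),
    mul_assoc, mul_one_div_cancel hp0.ne', mul_one] at h4

lemma opNormLp_eq {p : ℝ} (M : Matrix (ZMod 2) (ZMod 2) ℂ) {c : ℝ} (hc : 0 ≤ c)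
    (hub : ∀ ξ, pNorm p (M.mulVec ξ) ≤ c * pNorm p ξ)
    (hw : ∃ ξ, 0 < pNorm p ξ ∧ c * pNorm p ξ ≤ pNorm p (M.mulVec ξ)) :
    opNormLp p M = c := by
  refine le_antisymm (csInf_le ⟨0, fun x hx => hx.1⟩ ⟨hc, hub⟩) (le_csInf ⟨c, hc, hub⟩ ?_)
  rintro b ⟨hb0, hb⟩
  obtain ⟨ξ, hξpos, hξ⟩ := hw
  exact le_of_mul_le_mul_right (hξ.trans (hb ξ)) hξpos

lemma two_rpow_add' (a b : ℝ) : (2:ℝ)^a * 2^b = 2^(a+b) :=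
  (Real.rpow_add two_pos a b).symm

lemma pNorm_const {p : ℝ} (hp0 : 0 < p) (v : ZMod 2 → ℂ) {r : ℝ} (hr : 0 ≤ r)
    (h0 : ‖v 0‖ = r) (h1 : ‖v 1‖ = r) : pNorm p v = 2^(1/p) * r := by
  rw [pNorm_zmod2, h0, h1, ← two_mul,
    Real.mul_rpow (by norm_num) (Real.rpow_nonneg hr p),
    ← Real.rpow_mul hr, mul_one_div_cancel hp0.ne', Real.rpow_one]

lemma pNorm_single {p : ℝ} (hp0 : 0 < p) (v : ZMod 2 → ℂ) (h1 : v 1 = 0) :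
    pNorm p v = ‖v 0‖ := by
  rw [pNorm_zmod2, h1, norm_zero, Real.zero_rpow hp0.ne', add_zero,
    ← Real.rpow_mul (norm_nonneg _), mul_one_div_cancel hp0.ne', Real.rpow_one]

lemma sqrt_two_div_two : Real.sqrt 2 / 2 = (2:ℝ)^(-(1/2):ℝ) := by
  have h : (2:ℝ)^(-(1/2):ℝ) * 2 = Real.sqrt 2 := by
    calc (2:ℝ)^(-(1/2):ℝ) * 2 = 2^(-(1/2):ℝ) * 2^(1:ℝ) := by rw [Real.rpow_one]
    _ = 2^(1/2:ℝ) := by rw [two_rpow_add']; norm_num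
    _ = Real.sqrt 2 := by rw [Real.sqrt_eq_rpow]
  rw [div_eq_iff (by norm_num : (2:ℝ) ≠ 0)]
  exact h.symm

lemma abs_exp_le {p : ℝ} (hp : 1 ≤ p) (h : p ≤ 2) : |1/p - 1/2| = 1/p - 1/2 := by
  have hp0 : 0 < p := lt_of_lt_of_le one_pos hp
  have h12 : (1:ℝ)/2 ≤ 1/p := by rw [div_le_div_iff₀ (by norm_num) hp0]; linarith
  rw [abs_of_nonneg (by linarith)]

lemma abs_exp_ge {p : ℝ} (hp : 1 ≤ p) (h : 2 ≤ p) : |1/p - 1/2| = 1/2 - 1/p := by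
  have hp0 : 0 < p := lt_of_lt_of_le one_pos hp
  have h12 : (1:ℝ)/p ≤ 1/2 := by rw [div_le_div_iff₀ hp0 (by norm_num)]; linarith
  rw [abs_of_nonpos (by linarith), neg_sub]

/-- The value of the `F^p` norm on suitable unimodular vectors. -/
lemma FpNorm_value {p : ℝ} (hp : 1 ≤ p) (ξ : ZMod 2 → ℂ)
    (hx : ‖ξ 0‖ = 1) (hy : ‖ξ 1‖ = 1)
    (hs : ‖ξ 0 + ξ 1‖ = Real.sqrt 2) (hd : ‖ξ 0 - ξ 1‖ = Real.sqrt 2) :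
    FpNorm 2 p ξ = 2 ^ |1/p - 1/2| := by
  have hp0 : 0 < p := lt_of_lt_of_le one_pos hp
  set M := dftMatrix 2 * Matrix.diagonal ξ * (dftMatrix 2)⁻¹ with hM
  have hm0 : ∀ v : ZMod 2 → ℂ,
      (M.mulVec v) 0 = (ξ 0 * (v 0 + v 1) + ξ 1 * (v 0 - v 1)) / 2 := by
    intro v; rw [hM, Fp_mulVec]; norm_num
  have hm1 : ∀ v : ZMod 2 → ℂ,
      (M.mulVec v) 1 = (ξ 0 * (v 0 + v 1) - ξ 1 * (v 0 - v 1)) / 2 := by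
    intro v; rw [hM, Fp_mulVec]; norm_num; ring
  have h2 : ∀ v : ZMod 2 → ℂ, ‖(M.mulVec v) 0‖^(2:ℕ) + ‖(M.mulVec v) 1‖^(2:ℕ)
      = ‖v 0‖^(2:ℕ) + ‖v 1‖^(2:ℕ) := by
    intro v
    rw [hm0, hm1]
    set z := ξ 0 * (v 0 + v 1) with hz
    set w := ξ 1 * (v 0 - v 1) with hw
    have P1 := parallelogram_law_with_norm ℝ z w
    have P2 := parallelogram_law_with_norm ℝ (v 0) (v 1)
    have hzn : ‖z‖ = ‖v 0 + v 1‖ := by rw [hz, norm_mul, hx, one_mul]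
    have hwn : ‖w‖ = ‖v 0 - v 1‖ := by rw [hw, norm_mul, hy, one_mul]
    rw [hzn, hwn] at P1
    have n2 : ‖(2:ℂ)‖ = 2 := by norm_num
    rw [norm_div, norm_div, n2]
    simp only [pow_two]
    nlinarith [P1, P2]
  have hub : ∀ v, pNorm p (M.mulVec v) ≤ 2^|1/p - 1/2| * pNorm p v :=
    fun v => pnorm_bound hp v _ (h2 v)
  refine opNormLp_eq M (by positivity) hub ?_
  rcases le_total p 2 with hple | hpge
  · -- witness `(1,0)` for `p ≤ 2`
    refine ⟨(fun j => if j = 0 then 1 else 0), ?_, ?_⟩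
    · rw [pNorm_zmod2]
      norm_num [Real.zero_rpow hp0.ne']
    · have hMv0 : (M.mulVec (fun j => if j = 0 then 1 else 0)) 0 = (ξ 0 + ξ 1)/2 := by
        rw [hm0]; norm_num
      have hMv1 : (M.mulVec (fun j => if j = 0 then 1 else 0)) 1 = (ξ 0 - ξ 1)/2 := by
        rw [hm1]; norm_num
      have hn0 : ‖(M.mulVec (fun j => if j = 0 then 1 else 0)) 0‖ = (2:ℝ)^(-(1/2):ℝ) := by
        rw [hMv0, norm_div, hs, show ‖(2:ℂ)‖ = 2 by norm_num, sqrt_two_div_two]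
      have hn1 : ‖(M.mulVec (fun j => if j = 0 then 1 else 0)) 1‖ = (2:ℝ)^(-(1/2):ℝ) := by
        rw [hMv1, norm_div, hd, show ‖(2:ℂ)‖ = 2 by norm_num, sqrt_two_div_two]
      have hval : pNorm p (M.mulVec (fun j => if j = 0 then 1 else 0))
          = 2^(1/p - 1/2 : ℝ) := by
        rw [pNorm_const hp0 _ (Real.rpow_nonneg (by norm_num) _) hn0 hn1, two_rpow_add']
        congr 1
      rw [hval]
      have : pNorm p (fun j : ZMod 2 => if j = 0 then (1:ℂ) else 0) = 1 := by
        rw [pNorm_zmod2]; norm_num [Real.zero_rpow hp0.ne']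
      rw [this, mul_one, abs_exp_le hp hple]
  · -- witness `(conj ξ₀ + conj ξ₁, conj ξ₀ - conj ξ₁)` for `2 ≤ p`
    set c : ℂ → ℂ := fun z => (starRingEnd ℂ) z with hc
    set v : ZMod 2 → ℂ := fun j => if j = 0 then c (ξ 0) + c (ξ 1) else c (ξ 0) - c (ξ 1)
      with hv
    have hv0 : v 0 = c (ξ 0) + c (ξ 1) := by simp [hv]
    have hv1 : v 1 = c (ξ 0) - c (ξ 1) := by simp [hv]
    have hn0 : ‖v 0‖ = Real.sqrt 2 := by
      rw [hv0, hc, ← map_add, RCLike.norm_conj, hs]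
    have hn1 : ‖v 1‖ = Real.sqrt 2 := by
      rw [hv1, hc, ← map_sub, RCLike.norm_conj, hd]
    have hvnorm : pNorm p v = 2^(1/p + 1/2 : ℝ) := by
      rw [pNorm_const hp0 _ (Real.sqrt_nonneg 2) hn0 hn1, Real.sqrt_eq_rpow, two_rpow_add']
    have hxx : ξ 0 * c (ξ 0) = 1 := by
      rw [hc, Complex.mul_conj]
      norm_cast
      rw [Complex.normSq_eq_norm_sq, hx]; norm_num
    have hyy : ξ 1 * c (ξ 1) = 1 := by
      rw [hc, Complex.mul_conj]
      norm_cast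
      rw [Complex.normSq_eq_norm_sq, hy]; norm_num
    have hMv0 : (M.mulVec v) 0 = 2 := by
      rw [hm0, hv0, hv1]
      have : ξ 0 * (c (ξ 0) + c (ξ 1) + (c (ξ 0) - c (ξ 1)))
          + ξ 1 * (c (ξ 0) + c (ξ 1) - (c (ξ 0) - c (ξ 1)))
          = 2 * (ξ 0 * c (ξ 0)) + 2 * (ξ 1 * c (ξ 1)) := by ring
      rw [this, hxx, hyy]; norm_num
    have hMv1 : (M.mulVec v) 1 = 0 := by
      rw [hm1, hv0, hv1]
      have : ξ 0 * (c (ξ 0) + c (ξ 1) + (c (ξ 0) - c (ξ 1)))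
          - ξ 1 * (c (ξ 0) + c (ξ 1) - (c (ξ 0) - c (ξ 1)))
          = 2 * (ξ 0 * c (ξ 0)) - 2 * (ξ 1 * c (ξ 1)) := by ring
      rw [this, hxx, hyy]; ring
    have hMvnorm : pNorm p (M.mulVec v) = 2 := by
      rw [pNorm_single hp0 _ hMv1, hMv0]; norm_num
    refine ⟨v, ?_, ?_⟩
    · rw [hvnorm]; positivity
    · rw [hvnorm, hMvnorm, abs_exp_ge hp hpge, two_rpow_add']
      rw [show (1/2 - 1/p + (1/p + 1/2) : ℝ) = 1 by ring, Real.rpow_one]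

/-- The two distinguished unimodular vectors. -/
noncomputable def xiA : ZMod 2 → ℂ := fun j => if j = 0 then 1 else Complex.I
noncomputable def xiB : ZMod 2 → ℂ := fun j => if j = 0 then Complex.I else 1

lemma norm_one_add_I : ‖(1 + Complex.I)‖ = Real.sqrt 2 := by
  rw [Complex.norm_def]; norm_num [Complex.normSq_apply]

lemma norm_one_sub_I : ‖(1 - Complex.I)‖ = Real.sqrt 2 := by
  rw [Complex.norm_def]; norm_num [Complex.normSq_apply]

lemma norm_I_sub_one : ‖(Complex.I - 1)‖ = Real.sqrt 2 := by
  rw [show Complex.I - 1 = -(1 - Complex.I) by ring, norm_neg]; exact norm_one_sub_I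

lemma FpNorm_xiA {p : ℝ} (hp : 1 ≤ p) : FpNorm 2 p xiA = 2 ^ |1/p - 1/2| := by
  refine FpNorm_value hp xiA (by simp [xiA]) (by simp [xiA]) ?_ ?_
  · show ‖(1 + Complex.I : ℂ)‖ = Real.sqrt 2
    exact norm_one_add_I
  · show ‖(1 - Complex.I : ℂ)‖ = Real.sqrt 2
    exact norm_one_sub_I

lemma FpNorm_xiB {p : ℝ} (hp : 1 ≤ p) : FpNorm 2 p xiB = 2 ^ |1/p - 1/2| := by
  refine FpNorm_value hp xiB (by simp [xiB]) (by simp [xiB]) ?_ ?_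
  · show ‖(Complex.I + 1 : ℂ)‖ = Real.sqrt 2
    rw [add_comm]; exact norm_one_add_I
  · show ‖(Complex.I - 1 : ℂ)‖ = Real.sqrt 2
    exact norm_I_sub_one

/-- Any algebra automorphism of `ℂ²` maps `xiA` to `xiA` or `xiB`. -/
lemma phi_xiA (φ : (ZMod 2 → ℂ) ≃ₐ[ℂ] (ZMod 2 → ℂ)) : φ xiA = xiA ∨ φ xiA = xiB := by
  set e0 : ZMod 2 → ℂ := fun j => if j = 0 then 1 else 0 with he0
  have hidem : φ e0 * φ e0 = φ e0 := by
    rw [← map_mul]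
    congr 1
    funext j; rcases zmod2_cases j with rfl | rfl <;> simp [he0]
  have hval : ∀ j, φ e0 j = 0 ∨ φ e0 j = 1 := by
    intro j
    have h1 := congrFun hidem j
    rw [Pi.mul_apply] at h1
    have h : φ e0 j * (φ e0 j - 1) = 0 := by
      rw [mul_sub, h1, mul_one, sub_self]
    rcases mul_eq_zero.1 h with h | h
    · exact Or.inl h
    · exact Or.inr (sub_eq_zero.1 h)
  have hne0 : φ e0 ≠ 0 := by
    intro h
    have h2 : e0 = 0 := φ.injective (h.trans (map_zero φ).symm)
    have := congrFun h2 0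
    simp [he0] at this
  have hne1 : φ e0 ≠ 1 := by
    intro h
    have h2 : e0 = 1 := φ.injective (h.trans (map_one φ).symm)
    have := congrFun h2 1
    simp [he0] at this
  have hcases : φ e0 = e0 ∨ φ e0 = (fun j => if j = 0 then 0 else 1) := by
    rcases hval 0 with h0 | h0 <;> rcases hval 1 with h1 | h1
    · exact absurd (funext fun j => by
        rcases zmod2_cases j with rfl | rfl <;> simp [h0, h1]) hne0
    · exact Or.inr (funext fun j => by
        rcases zmod2_cases j with rfl | rfl <;> simp [h0, h1])
    · exact Or.inl (funext fun j => by
        rcases zmod2_cases j with rfl | rfl <;> simp only [h0, h1] <;> simp [he0])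
    · exact absurd (funext fun j => by
        rcases zmod2_cases j with rfl | rfl <;> simp [h0, h1]) hne1
  have hxiA : xiA = Complex.I • (1 : ZMod 2 → ℂ) + (1 - Complex.I) • e0 := by
    funext j
    rcases zmod2_cases j with rfl | rfl <;> simp [xiA, he0]
  have hphi : φ xiA = Complex.I • (1 : ZMod 2 → ℂ) + (1 - Complex.I) • φ e0 := by
    rw [hxiA, map_add, map_smul, map_smul, map_one]
  rcases hcases with h | h
  · left; rw [hphi, h, ← hxiA]
  · right
    rw [hphi, h]
    funext j
    rcases zmod2_cases j with rfl | rfl <;> simp [xiB]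

/-- If there is an isometric algebra isomorphism between `ℂ²` with the
`F^p(ℤ_2)`-norm and `ℂ²` with the `F^q(ℤ_2)`-norm, then
`|1/p − 1/2| = |1/q − 1/2|`. -/
theorem stmt10 (p q : ℝ) (hp : 1 ≤ p) (hq : 1 ≤ q)
    (φ : (ZMod 2 → ℂ) ≃ₐ[ℂ] (ZMod 2 → ℂ))
    (hiso : ∀ ξ : ZMod 2 → ℂ, FpNorm 2 q (φ ξ) = FpNorm 2 p ξ) :
    |1 / p - 1 / 2| = |1 / q - 1 / 2| := by
  have h := hiso xiA
  have key : (2:ℝ) ^ |1/q - 1/2| = 2 ^ |1/p - 1/2| := by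
    rcases phi_xiA φ with hA | hA
    · rw [hA, FpNorm_xiA hq, FpNorm_xiA hp] at h
      exact h
    · rw [hA, FpNorm_xiB hq, FpNorm_xiA hp] at h
      exact h
  exact le_antisymm
    ((Real.rpow_le_rpow_left_iff one_lt_two).1 key.ge)
    ((Real.rpow_le_rpow_left_iff one_lt_two).1 key.le)
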